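/- Let η : ℝ/ℤ → ℝ be a Lipschitz function. Then the graph of η, as a subset of the annulus (ℝ/ℤ) × ℝ, is C¹-regular at a point (θ, η(θ)) if and only if η is differentiable at θ and the paratangent cone at (θ, η(θ)) is the line of slope η'(θ); in particular, the graph of η is C¹-regular at every point if and only if η is continuously differentiable. -/

import Mathlib

open Filter Topology

/-- The (Bouligand) paratangent cone of `K ⊆ ℝ²` at `x`: all limits of sequences
`t_n • (a_n − b_n)` where `a_n, b_n ∈ K` converge to `x`. -/
def paratangentCone (K : Set (ℝ × ℝ)) (x : ℝ × ℝ) : Set (ℝ × ℝ) :=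
  {v | ∃ (t : ℕ → ℝ) (a b : ℕ → ℝ × ℝ),
    (∀ n, a n ∈ K) ∧ (∀ n, b n ∈ K) ∧
    Tendsto a atTop (𝓝 x) ∧ Tendsto b atTop (𝓝 x) ∧
    Tendsto (fun n => t n • (a n - b n)) atTop (𝓝 v)}

/-- `K` is `C¹`-regular at `x` if its paratangent cone at `x` is contained in a line
(through the origin). -/
def C1RegularAt (K : Set (ℝ × ℝ)) (x : ℝ × ℝ) : Prop :=
  ∃ w : ℝ × ℝ, w ≠ 0 ∧ paratangentCone K x ⊆ {v | ∃ c : ℝ, v = c • w}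

namespace Stmt7Aux

variable {η : ℝ → ℝ} {C : NNReal}

lemma graph_snd {p : ℝ × ℝ} (hp : p ∈ {p : ℝ × ℝ | ∃ θ : ℝ, p = (θ, η θ)}) :
    p.2 = η p.1 := by obtain ⟨x, rfl⟩ := hp; rfl

lemma smul_mem_cone {K : Set (ℝ × ℝ)} {x v : ℝ × ℝ} (c : ℝ)
    (hv : v ∈ paratangentCone K x) : c • v ∈ paratangentCone K x := by
  obtain ⟨t, a, b, ha, hb, hat, hbt, hlim⟩ := hv
  exact ⟨fun n => c * t n, a, b, ha, hb, hat, hbt, by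
    simpa [mul_smul] using hlim.const_smul c⟩

lemma slope_mem_cone (hc : Continuous η) {θ m : ℝ} {α β : ℕ → ℝ}
    (hne : ∀ n, α n ≠ β n) (hα : Tendsto α atTop (𝓝 θ)) (hβ : Tendsto β atTop (𝓝 θ))
    (hm : Tendsto (fun n => (η (α n) - η (β n)) / (α n - β n)) atTop (𝓝 m)) :
    ((1 : ℝ), m) ∈ paratangentCone {p : ℝ × ℝ | ∃ θ : ℝ, p = (θ, η θ)} (θ, η θ) := by
  refine ⟨fun n => (α n - β n)⁻¹, fun n => (α n, η (α n)), fun n => (β n, η (β n)),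
    fun n => ⟨α n, rfl⟩, fun n => ⟨β n, rfl⟩,
    hα.prodMk_nhds ((hc.tendsto θ).comp hα),
    hβ.prodMk_nhds ((hc.tendsto θ).comp hβ), ?_⟩
  have key : ∀ n, (α n - β n)⁻¹ • (((α n, η (α n)) : ℝ × ℝ) - (β n, η (β n)))
      = ((1 : ℝ), (η (α n) - η (β n)) / (α n - β n)) := by
    intro n
    have h : α n - β n ≠ 0 := sub_ne_zero.mpr (hne n)
    have h2 : (((α n, η (α n)) : ℝ × ℝ) - (β n, η (β n)))
        = (α n - β n, η (α n) - η (β n)) := rfl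
    rw [h2, Prod.smul_mk, smul_eq_mul, smul_eq_mul, inv_mul_cancel₀ h, inv_mul_eq_div]
  simp_rw [key]
  exact tendsto_const_nhds.prodMk_nhds hm

lemma slope_abs_le (hη : LipschitzWith C η) {x y : ℝ} (h : x ≠ y) :
    |(η x - η y) / (x - y)| ≤ (C : ℝ) := by
  have h0 : x - y ≠ 0 := sub_ne_zero.mpr h
  have hd := hη.dist_le_mul x y
  rw [Real.dist_eq, Real.dist_eq] at hd
  rw [abs_div, div_le_iff₀ (abs_pos.mpr h0)]
  exact hd

lemma tendsto_one_div : Tendsto (fun n : ℕ => 1 / ((n : ℝ) + 1)) atTop (𝓝 0) :=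
  tendsto_one_div_add_atTop_nhds_zero_nat

/-- A sequence of points on the graph with controlled slopes gives an element `(1, m)`
of the paratangent cone. -/
lemma exists_one_mem_cone (hη : LipschitzWith C η) (θ : ℝ) :
    ∃ m : ℝ, ((1 : ℝ), m) ∈ paratangentCone {p : ℝ × ℝ | ∃ θ : ℝ, p = (θ, η θ)} (θ, η θ) := by
  set x : ℕ → ℝ := fun n => θ + 1 / ((n : ℝ) + 1) with hx
  have hne : ∀ n, x n ≠ θ := by
    intro n
    have : (0 : ℝ) < 1 / ((n : ℝ) + 1) := by positivity
    simp only [hx]; intro hcon; nlinarith [hcon]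
  have hb : ∀ n, (η (x n) - η θ) / (x n - θ) ∈ Set.Icc (-(C : ℝ)) (C : ℝ) := by
    intro n
    exact abs_le.mp (slope_abs_le hη (hne n))
  obtain ⟨m, _, φ, hφ, hmlim⟩ := isCompact_Icc.tendsto_subseq hb
  have hxθ : Tendsto x atTop (𝓝 θ) := by
    have := tendsto_const_nhds (x := θ) (f := atTop (α := ℕ)) |>.add tendsto_one_div
    simpa [hx, one_div] using this
  refine ⟨m, slope_mem_cone hη.continuous (fun n => hne (φ n))
    (hxθ.comp hφ.tendsto_atTop) tendsto_const_nhds ?_⟩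
  simpa [Function.comp_def] using hmlim

/-- If the paratangent cone is contained in the line of slope `s`, then `η` has derivative
`s` at `θ`. -/
lemma hasDerivAt_of_cone (hη : LipschitzWith C η) {θ s : ℝ}
    (hsub : paratangentCone {p : ℝ × ℝ | ∃ θ : ℝ, p = (θ, η θ)} (θ, η θ)
      ⊆ {v | ∃ c : ℝ, v = c • ((1 : ℝ), s)}) :
    HasDerivAt η s θ := by
  rw [hasDerivAt_iff_tendsto_slope]
  by_contra hcon
  rw [Metric.tendsto_nhdsWithin_nhds] at hcon
  push_neg at hcon
  obtain ⟨ε, hε, hδ⟩ := hcon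
  have hxex : ∀ n : ℕ, ∃ x, x ≠ θ ∧ |x - θ| < 1 / ((n : ℝ) + 1) ∧ ε ≤ |slope η θ x - s| := by
    intro n
    obtain ⟨x, hx1, hx2, hx3⟩ := hδ (1 / ((n : ℝ) + 1)) (by positivity)
    exact ⟨x, hx1, by simpa [Real.dist_eq] using hx2, by simpa [Real.dist_eq] using hx3⟩
  choose x hx1 hx2 hx3 using hxex
  have hxθ : Tendsto x atTop (𝓝 θ) := by
    rw [tendsto_iff_dist_tendsto_zero]
    refine squeeze_zero (fun n => dist_nonneg) (fun n => ?_) tendsto_one_div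
    exact le_of_lt (by simpa [Real.dist_eq] using hx2 n)
  have hb : ∀ n, slope η θ (x n) ∈ Set.Icc (-(C : ℝ)) (C : ℝ) := by
    intro n
    rw [slope_def_field]
    exact abs_le.mp (slope_abs_le hη (hx1 n))
  obtain ⟨m, _, φ, hφ, hmlim⟩ := isCompact_Icc.tendsto_subseq hb
  have hms : ε ≤ |m - s| := by
    refine ge_of_tendsto' ((hmlim.sub_const s).abs) (fun n => hx3 (φ n))
  have hmem : ((1 : ℝ), m) ∈ paratangentCone {p : ℝ × ℝ | ∃ θ : ℝ, p = (θ, η θ)} (θ, η θ) := by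
    refine slope_mem_cone hη.continuous (fun n => hx1 (φ n)) (hxθ.comp hφ.tendsto_atTop)
      tendsto_const_nhds ?_
    have : ∀ n, (η (x (φ n)) - η θ) / (x (φ n) - θ) = slope η θ (x (φ n)) := by
      intro n; rw [slope_def_field]
    simpa [Function.comp_def, this] using hmlim
  obtain ⟨c, hc⟩ := hsub hmem
  rw [Prod.ext_iff] at hc
  obtain ⟨h1, h2⟩ := hc
  simp only [Prod.smul_fst, Prod.smul_snd, smul_eq_mul, mul_one] at h1 h2
  rw [← h1, one_mul] at h2
  rw [h2] at hms
  simp at hms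
  linarith

lemma one_deriv_mem_cone (hc : Continuous η) {θ s : ℝ} (h : HasDerivAt η s θ) :
    ((1 : ℝ), s) ∈ paratangentCone {p : ℝ × ℝ | ∃ θ : ℝ, p = (θ, η θ)} (θ, η θ) := by
  set x : ℕ → ℝ := fun n => θ + 1 / ((n : ℝ) + 1) with hx
  have hne : ∀ n, x n ≠ θ := by
    intro n
    have : (0 : ℝ) < 1 / ((n : ℝ) + 1) := by positivity
    simp only [hx]; intro hcon; nlinarith [hcon]
  have hxθ : Tendsto x atTop (𝓝 θ) := by
    have := tendsto_const_nhds (x := θ) (f := atTop (α := ℕ)) |>.add tendsto_one_div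
    simpa [hx, one_div] using this
  have hx' : Tendsto x atTop (𝓝[≠] θ) :=
    tendsto_nhdsWithin_of_tendsto_nhds_of_eventually_within _ hxθ
      (Eventually.of_forall hne)
  have hsl := (hasDerivAt_iff_tendsto_slope.mp h).comp hx'
  refine slope_mem_cone hc hne hxθ tendsto_const_nhds ?_
  have : ∀ n, (η (x n) - η θ) / (x n - θ) = slope η θ (x n) := by
    intro n; rw [slope_def_field]
  simpa [Function.comp_def, this] using hsl

lemma part1_forward (hη : LipschitzWith C η) (θ : ℝ)
    (hreg : C1RegularAt {p : ℝ × ℝ | ∃ θ : ℝ, p = (θ, η θ)} (θ, η θ)) :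
    DifferentiableAt ℝ η θ ∧
      paratangentCone {p : ℝ × ℝ | ∃ θ : ℝ, p = (θ, η θ)} (θ, η θ)
        = {v | ∃ c : ℝ, v = c • ((1 : ℝ), deriv η θ)} := by
  obtain ⟨w, hw0, hsub⟩ := hreg
  obtain ⟨m, hm⟩ := exists_one_mem_cone hη θ
  obtain ⟨c, hc⟩ := hsub hm
  have hc1 : (1 : ℝ) = c * w.1 := congrArg Prod.fst hc
  have hw1 : w.1 ≠ 0 := by
    intro h; rw [h, mul_zero] at hc1; exact one_ne_zero hc1
  set s := w.2 / w.1 with hs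
  have hsub' : paratangentCone {p : ℝ × ℝ | ∃ θ : ℝ, p = (θ, η θ)} (θ, η θ)
      ⊆ {v | ∃ c : ℝ, v = c • ((1 : ℝ), s)} := by
    intro v hv
    obtain ⟨d, hd⟩ := hsub hv
    refine ⟨d * w.1, ?_⟩
    rw [hd]
    apply Prod.ext
    · simp [smul_eq_mul]
    · simp only [Prod.smul_snd, smul_eq_mul, hs]
      field_simp
  have hds : HasDerivAt η s θ := hasDerivAt_of_cone hη hsub'
  have hder : deriv η θ = s := hds.deriv
  refine ⟨hds.differentiableAt, ?_⟩
  apply Set.Subset.antisymm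
  · rw [hder]; exact hsub'
  · rintro v ⟨d, rfl⟩
    rw [hder]
    exact smul_mem_cone d (one_deriv_mem_cone hη.continuous hds)

lemma abs_deriv_le (hη : LipschitzWith C η) {θ : ℝ} (hd : DifferentiableAt ℝ η θ) :
    |deriv η θ| ≤ (C : ℝ) := by
  set x : ℕ → ℝ := fun n => θ + 1 / ((n : ℝ) + 1) with hx
  have hne : ∀ n, x n ≠ θ := by
    intro n
    have : (0 : ℝ) < 1 / ((n : ℝ) + 1) := by positivity
    simp only [hx]; intro hcon; nlinarith [hcon]
  have hxθ : Tendsto x atTop (𝓝 θ) := by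
    have := tendsto_const_nhds (x := θ) (f := atTop (α := ℕ)) |>.add tendsto_one_div
    simpa [hx, one_div] using this
  have hx' : Tendsto x atTop (𝓝[≠] θ) :=
    tendsto_nhdsWithin_of_tendsto_nhds_of_eventually_within _ hxθ
      (Eventually.of_forall hne)
  have hsl := (hasDerivAt_iff_tendsto_slope.mp hd.hasDerivAt).comp hx'
  refine le_of_tendsto hsl.abs (Eventually.of_forall fun n => ?_)
  show |slope η θ (x n)| ≤ (C : ℝ)
  rw [slope_def_field]
  exact slope_abs_le hη (hne n)

lemma deriv_cont (hη : LipschitzWith C η)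
    (hreg : ∀ θ : ℝ, C1RegularAt {p : ℝ × ℝ | ∃ θ : ℝ, p = (θ, η θ)} (θ, η θ)) :
    Continuous (deriv η) := by
  have h1 := fun θ => part1_forward hη θ (hreg θ)
  rw [continuous_iff_continuousAt]
  intro θ
  by_contra hcon
  rw [Metric.continuousAt_iff] at hcon
  push_neg at hcon
  obtain ⟨ε, hε, hδ⟩ := hcon
  have hyex : ∀ n : ℕ, ∃ y, |y - θ| < 1 / ((n : ℝ) + 1) ∧ ε ≤ |deriv η y - deriv η θ| := by
    intro n
    obtain ⟨y, hy1, hy2⟩ := hδ (1 / ((n : ℝ) + 1)) (by positivity)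
    exact ⟨y, by simpa [Real.dist_eq] using hy1, by simpa [Real.dist_eq] using hy2⟩
  choose y hy1 hy2 using hyex
  have hyθ : Tendsto y atTop (𝓝 θ) := by
    rw [tendsto_iff_dist_tendsto_zero]
    refine squeeze_zero (fun n => dist_nonneg) (fun n => ?_) tendsto_one_div
    exact le_of_lt (by simpa [Real.dist_eq] using hy1 n)
  have hb : ∀ n, deriv η (y n) ∈ Set.Icc (-(C : ℝ)) (C : ℝ) :=
    fun n => abs_le.mp (abs_deriv_le hη (h1 (y n)).1)
  obtain ⟨m, _, φ, hφ, hmlim⟩ := isCompact_Icc.tendsto_subseq hb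
  have hms : ε ≤ |m - deriv η θ| :=
    ge_of_tendsto' ((hmlim.sub_const _).abs) (fun n => hy2 (φ n))
  -- pick nearby points with good slope approximation
  have hpick : ∀ n : ℕ, ∃ z, z ≠ y (φ n) ∧ |z - y (φ n)| < 1 / ((n : ℝ) + 1) ∧
      |slope η (y (φ n)) z - deriv η (y (φ n))| < 1 / ((n : ℝ) + 1) := by
    intro n
    have hd := (h1 (y (φ n))).1.hasDerivAt
    rw [hasDerivAt_iff_tendsto_slope, Metric.tendsto_nhdsWithin_nhds] at hd
    obtain ⟨δ, hδ0, hδ2⟩ := hd (1 / ((n : ℝ) + 1)) (by positivity)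
    set d := min δ (1 / ((n : ℝ) + 1)) with hdd
    have hd0 : 0 < d := lt_min hδ0 (by positivity)
    refine ⟨y (φ n) + d / 2, by intro h; nlinarith [hd0, congrArg (· - y (φ n)) h], ?_, ?_⟩
    · have : |y (φ n) + d / 2 - y (φ n)| = d / 2 := by
        rw [add_sub_cancel_left, abs_of_pos (by linarith)]
      rw [this]
      calc d / 2 ≤ (1 / ((n : ℝ) + 1)) / 2 := by
            have := min_le_right δ (1 / ((n : ℝ) + 1)); linarith
        _ < 1 / ((n : ℝ) + 1) := by
            have : (0 : ℝ) < 1 / ((n : ℝ) + 1) := by positivity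
            linarith
    · have hmem : y (φ n) + d / 2 ∈ ({y (φ n)}ᶜ : Set ℝ) := by
        simp only [Set.mem_compl_iff, Set.mem_singleton_iff]
        intro h; nlinarith [hd0, congrArg (· - y (φ n)) h]
      have hdist : dist (y (φ n) + d / 2) (y (φ n)) < δ := by
        rw [Real.dist_eq, add_sub_cancel_left, abs_of_pos (by linarith)]
        have := min_le_left δ (1 / ((n : ℝ) + 1)); linarith
      have := hδ2 hmem hdist
      rwa [Real.dist_eq] at this

  choose z hz1 hz2 hz3 using hpick
  have hyφθ : Tendsto (fun n => y (φ n)) atTop (𝓝 θ) := hyθ.comp hφ.tendsto_atTop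
  have hzθ : Tendsto z atTop (𝓝 θ) := by
    rw [tendsto_iff_dist_tendsto_zero]
    have hg : Tendsto (fun n : ℕ => 1 / ((n : ℝ) + 1) + dist (y (φ n)) θ) atTop (𝓝 0) := by
      have := tendsto_one_div.add (tendsto_iff_dist_tendsto_zero.mp hyφθ)
      simpa only [add_zero] using this
    refine squeeze_zero (fun n => dist_nonneg) (fun n => ?_) hg
    have ht : dist (z n) θ ≤ dist (z n) (y (φ n)) + dist (y (φ n)) θ := dist_triangle _ _ _
    have h2 : dist (z n) (y (φ n)) ≤ 1 / ((n : ℝ) + 1) :=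
      le_of_lt (by simpa [Real.dist_eq] using hz2 n)
    linarith
  have herr : Tendsto (fun n => slope η (y (φ n)) (z n) - deriv η (y (φ n))) atTop (𝓝 0) :=
    squeeze_zero_norm (fun n => le_of_lt (by simpa [Real.norm_eq_abs] using hz3 n))
      tendsto_one_div
  have hsl : Tendsto (fun n => slope η (y (φ n)) (z n)) atTop (𝓝 m) := by
    have h := hmlim.add herr
    rw [add_zero] at h
    have he : (fun n => ((fun k => deriv η (y k)) ∘ φ) n
        + (slope η (y (φ n)) (z n) - deriv η (y (φ n))))
        = fun n => slope η (y (φ n)) (z n) := by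
      funext n; simp [Function.comp]
    rwa [he] at h
  have hmem : ((1 : ℝ), m) ∈ paratangentCone {p : ℝ × ℝ | ∃ θ : ℝ, p = (θ, η θ)} (θ, η θ) := by
    refine slope_mem_cone hη.continuous hz1 hzθ hyφθ ?_
    simpa only [slope_def_field] using hsl
  rw [(h1 θ).2] at hmem
  obtain ⟨c, hc⟩ := hmem
  rw [Prod.ext_iff] at hc
  obtain ⟨hc1, hc2⟩ := hc
  simp only [Prod.smul_fst, Prod.smul_snd, smul_eq_mul, mul_one] at hc1 hc2
  rw [← hc1, one_mul] at hc2
  rw [hc2] at hms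
  simp at hms
  linarith

lemma regular_of_contDiff (hC : ContDiff ℝ 1 η) (θ : ℝ) :
    C1RegularAt {p : ℝ × ℝ | ∃ θ : ℝ, p = (θ, η θ)} (θ, η θ) := by
  have hdiff : Differentiable ℝ η := hC.differentiable one_ne_zero
  have hDc : Continuous (deriv η) := (contDiff_one_iff_deriv.mp hC).2
  refine ⟨(1, deriv η θ), by simp [Prod.ext_iff], ?_⟩
  rintro v ⟨t, a, b, ha, hb, hat, hbt, hlim⟩
  set D := deriv η θ with hD
  set α : ℕ → ℝ := fun n => (a n).1 with hα
  set β : ℕ → ℝ := fun n => (b n).1 with hβ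
  have ha2 : ∀ n, (a n).2 = η (α n) := fun n => graph_snd (ha n)
  have hb2 : ∀ n, (b n).2 = η (β n) := fun n => graph_snd (hb n)
  have hαθ : Tendsto α atTop (𝓝 θ) := (continuous_fst.tendsto _).comp hat
  have hβθ : Tendsto β atTop (𝓝 θ) := (continuous_fst.tendsto _).comp hbt
  have hkey : ∀ n, (t n • (a n - b n) : ℝ × ℝ)
      = (t n * (α n - β n), t n * (η (α n) - η (β n))) := by
    intro n
    apply Prod.ext
    · simp [hα, hβ, smul_eq_mul]
    · simp [ha2 n, hb2 n, smul_eq_mul]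
  have hu : Tendsto (fun n => t n * (α n - β n)) atTop (𝓝 v.1) := by
    have := (continuous_fst.tendsto _).comp hlim
    simpa only [Function.comp_def, hkey] using this
  have hw : Tendsto (fun n => t n * (η (α n) - η (β n))) atTop (𝓝 v.2) := by
    have := (continuous_snd.tendsto _).comp hlim
    simpa only [Function.comp_def, hkey] using this
  set r := v.2 - D * v.1 with hr
  have hrlim : Tendsto (fun n => t n * (η (α n) - η (β n)) - D * (t n * (α n - β n)))
      atTop (𝓝 r) := hw.sub (hu.const_mul D)
  have hr0 : ∀ ε : ℝ, 0 < ε → |r| ≤ ε := by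
    intro ε hε
    set ε' := ε / (|v.1| + 1) with hε'def
    have hv1 : (0 : ℝ) < |v.1| + 1 := by positivity
    have hε' : 0 < ε' := by positivity
    obtain ⟨δ, hδ0, hδ2⟩ := Metric.continuousAt_iff.mp hDc.continuousAt ε' hε'
    have hg : ∀ p ∈ Metric.ball θ δ, ∀ q ∈ Metric.ball θ δ,
        |(η p - D * p) - (η q - D * q)| ≤ ε' * |p - q| := by
      intro p hp q hq
      have hder : ∀ x ∈ Metric.ball θ δ,
          HasDerivWithinAt (fun x => η x - D * x) (deriv η x - D) (Metric.ball θ δ) x := by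
        intro x _
        have h1 : HasDerivAt η (deriv η x) x := (hdiff x).hasDerivAt
        have h2 : HasDerivAt (fun x : ℝ => D * x) (D * 1) x :=
          (hasDerivAt_id x).const_mul D
        rw [mul_one] at h2
        exact (h1.sub h2).hasDerivWithinAt
      have hbd : ∀ x ∈ Metric.ball θ δ, ‖deriv η x - D‖ ≤ ε' := by
        intro x hx
        have := hδ2 (show dist x θ < δ from Metric.mem_ball.mp hx)
        rw [Real.dist_eq] at this
        exact le_of_lt (by simpa [Real.norm_eq_abs] using this)
      have := (convex_ball θ δ).norm_image_sub_le_of_norm_hasDerivWithin_le hder hbd hq hp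
      simpa [Real.norm_eq_abs] using this
    have hev : ∀ᶠ n in atTop,
        |t n * (η (α n) - η (β n)) - D * (t n * (α n - β n))| ≤ ε' * (|v.1| + 1) := by
      have e1 : ∀ᶠ n in atTop, dist (α n) θ < δ :=
        (Metric.tendsto_nhds.mp hαθ) δ hδ0
      have e2 : ∀ᶠ n in atTop, dist (β n) θ < δ :=
        (Metric.tendsto_nhds.mp hβθ) δ hδ0
      have e3 : ∀ᶠ n in atTop, |t n * (α n - β n) - v.1| < 1 := by
        have := (Metric.tendsto_nhds.mp hu) 1 one_pos
        simpa [Real.dist_eq] using this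
      filter_upwards [e1, e2, e3] with n h1 h2 h3
      have hgb := hg (α n) (Metric.mem_ball.mpr h1) (β n) (Metric.mem_ball.mpr h2)
      have habs : |t n * (α n - β n)| ≤ |v.1| + 1 := by
        have := abs_sub_abs_le_abs_sub (t n * (α n - β n)) v.1
        linarith [this, h3]
      calc |t n * (η (α n) - η (β n)) - D * (t n * (α n - β n))|
          = |t n| * |(η (α n) - D * α n) - (η (β n) - D * β n)| := by
            rw [← abs_mul]; ring_nf
        _ ≤ |t n| * (ε' * |α n - β n|) := by
            exact mul_le_mul_of_nonneg_left hgb (abs_nonneg _)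
        _ = ε' * |t n * (α n - β n)| := by rw [abs_mul]; ring
        _ ≤ ε' * (|v.1| + 1) := mul_le_mul_of_nonneg_left habs (le_of_lt hε')
    have := le_of_tendsto hrlim.abs hev
    calc |r| ≤ ε' * (|v.1| + 1) := this
      _ = ε := by rw [hε'def]; field_simp
  have : |r| ≤ 0 := le_of_forall_pos_le_add (by intro ε hε; simpa using hr0 ε hε)
  have hr00 : r = 0 := abs_eq_zero.mp (le_antisymm this (abs_nonneg _))
  refine ⟨v.1, ?_⟩
  apply Prod.ext
  · simp [smul_eq_mul]
  · simp only [Prod.smul_snd, smul_eq_mul]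
    rw [hr] at hr00
    linarith [hr00]

end Stmt7Aux

/-- For the graph of a Lipschitz function `η` on the circle (encoded as a `1`-periodic
Lipschitz function `η : ℝ → ℝ`): the graph is `C¹`-regular at `(θ, η θ)` if and only if
`η` is differentiable at `θ` and the paratangent cone there is exactly the line of slope
`η'(θ)`; and the graph is `C¹`-regular at every point if and only if `η` is `C¹`. -/
theorem stmt7 (η : ℝ → ℝ) (L : ℝ) (hη : LipschitzWith (Real.toNNReal L) η)
    (hper : ∀ t : ℝ, η (t + 1) = η t)
    (K : Set (ℝ × ℝ)) (hK : K = {p : ℝ × ℝ | ∃ θ : ℝ, p = (θ, η θ)}) :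
    (∀ θ : ℝ, C1RegularAt K (θ, η θ) ↔
      (DifferentiableAt ℝ η θ ∧
        paratangentCone K (θ, η θ) = {v | ∃ c : ℝ, v = c • ((1 : ℝ), deriv η θ)})) ∧
    ((∀ θ : ℝ, C1RegularAt K (θ, η θ)) ↔ ContDiff ℝ 1 η) := by
  subst hK
  constructor
  · intro θ
    constructor
    · exact fun h => Stmt7Aux.part1_forward hη θ h
    · rintro ⟨hd, heq⟩
      exact ⟨(1, deriv η θ), by simp [Prod.ext_iff], by rw [heq]⟩
  · constructor
    · intro hreg
      exact contDiff_one_iff_deriv.mpr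
        ⟨fun x => (Stmt7Aux.part1_forward hη x (hreg x)).1, Stmt7Aux.deriv_cont hη hreg⟩
    · exact fun hC θ => Stmt7Aux.regular_of_contDiff hC θ
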